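/- Rounding lemma for the parameterized FPTAS of R_{‖·‖}: let each degree d have nonnegative disutility contribution q(d), let q_σ > 0, fix ε ∈ (0,1] and m ≥ 1, define rounded disutilities α(d) = ⌊q(d)·m/(ε·q_σ)⌋. If O and S are valid sets of at most m degrees with S minimizing ∑_{d∈S} α(d) among valid sets, and ∑_{d∈O} q(d) ≥ q_σ, then ∑_{d∈S} q(d) ≤ (1+ε)·∑_{d∈O} q(d). -/

import Mathlib

open Finset

section PBDefs

variable {V D P : Type*}

/-- A valid outcome: exactly one degree chosen per project, total cost within budget. -/
def ValidSet [DecidableEq P] (proj : D → P) (c : D → ℕ) (b : ℕ) (S : Finset D) : Prop :=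
  (∀ j : P, (S.filter fun d => proj d = j).card = 1) ∧ ∑ d ∈ S, c d ≤ b

/-- The cost of the degree of project `j` chosen in `S`. -/
def chosenCost [DecidableEq P] (proj : D → P) (c : D → ℕ) (S : Finset D) (j : P) : ℕ :=
  ∑ d ∈ S.filter (fun d => proj d = j), c d

/-- Total cardinal utility (rule `R_{|S|}`): a voter gets 1 from project `j` iff the
chosen cost is nonzero and within her bounds. -/
def cardUtilTotal [Fintype V] [Fintype P] [DecidableEq P] (proj : D → P) (c : D → ℕ)
    (l u : V → P → ℕ) (S : Finset D) : ℕ :=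
  ∑ i : V, (univ.filter fun j : P =>
    chosenCost proj c S j ≠ 0 ∧ l i j ≤ chosenCost proj c S j ∧
      chosenCost proj c S j ≤ u i j).card

/-- Total cost utility (rule `R_{c(S)}`). -/
def costUtilTotal [Fintype V] [Fintype P] [DecidableEq P] (proj : D → P) (c : D → ℕ)
    (l u : V → P → ℕ) (S : Finset D) : ℕ :=
  ∑ i : V, ∑ j : P,
    if l i j ≤ chosenCost proj c S j ∧ chosenCost proj c S j ≤ u i j then
      chosenCost proj c S j else 0

/-- Total cost-capped utility (rule `R_{ĉ(S)}`). -/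
def cappedUtilTotal [Fintype V] [Fintype P] [DecidableEq P] (proj : D → P) (c : D → ℕ)
    (l u : V → P → ℕ) (S : Finset D) : ℕ :=
  ∑ i : V, ∑ j : P,
    if chosenCost proj c S j < l i j then 0
    else if chosenCost proj c S j ≤ u i j then chosenCost proj c S j
    else u i j

/-- Total distance disutility (rule `R_{‖·‖}`): distance of the chosen cost to the
interval `[l i j, u i j]`, via truncated subtraction (`max(l-c,0)+max(c-u,0)`). -/
def disTotal [Fintype V] [Fintype P] [DecidableEq P] (proj : D → P) (c : D → ℕ)
    (l u : V → P → ℕ) (S : Finset D) : ℕ :=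
  ∑ i : V, ∑ j : P,
    ((l i j - chosenCost proj c S j) + (chosenCost proj c S j - u i j))

/-- `τ_j`: the set of costs of degrees of project `j` unanimously acceptable to all voters. -/
def tauSet [Fintype V] [Fintype D] [DecidableEq P] (proj : D → P) (c : D → ℕ)
    (l u : V → P → ℕ) (j : P) : Finset ℕ :=
  ((univ : Finset D).filter fun d => proj d = j ∧ ∀ i : V, l i j ≤ c d ∧ c d ≤ u i j).image c

/-- Disutility contribution `q(d)` of a degree `d`. -/
def qContrib [Fintype V] (proj : D → P) (c : D → ℕ) (l u : V → P → ℕ) (d : D) : ℕ :=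
  (∑ i ∈ univ.filter (fun i : V => c d < l i (proj d)), (l i (proj d) - c d))
  + ∑ i ∈ univ.filter (fun i : V => u i (proj d) < c d), (c d - u i (proj d))

end PBDefs

/-- rounding lemma for the parameterized FPTAS for `R_{‖·‖}`. -/
theorem parameterized_fptas_rounding {D : Type*} (Valid : Finset D → Prop)
    (q : D → ℕ) (qσ m : ℕ) (ε : ℝ)
    (hε0 : 0 < ε) (hε1 : ε ≤ 1) (hm : 1 ≤ m) (hqσ : 0 < qσ)
    (α : D → ℕ) (hα : ∀ d, α d = ⌊((q d : ℝ) * m) / (ε * qσ)⌋₊)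
    (O S : Finset D) (hO : Valid O) (hSv : Valid S)
    (hOcard : O.card ≤ m) (hScard : S.card ≤ m)
    (hmin : ∀ T : Finset D, Valid T → ∑ d ∈ S, α d ≤ ∑ d ∈ T, α d)
    (hOPT : (qσ : ℝ) ≤ ∑ d ∈ O, (q d : ℝ)) :
    (∑ d ∈ S, (q d : ℝ)) ≤ (1 + ε) * ∑ d ∈ O, (q d : ℝ) := by
  have hm' : (0:ℝ) < m := by exact_mod_cast Nat.lt_of_lt_of_le Nat.zero_lt_one hm
  have hqσ' : (0:ℝ) < qσ := by exact_mod_cast hqσ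
  set c : ℝ := ε * qσ / m with hc
  have hc0 : 0 < c := by positivity
  have lem1 : ∀ d, (α d : ℝ) * c ≤ q d := by
    intro d
    have h1 : (α d : ℝ) ≤ (q d : ℝ) * m / (ε * qσ) := by
      rw [hα d]
      exact Nat.floor_le (by positivity)
    calc (α d : ℝ) * c ≤ ((q d : ℝ) * m / (ε * qσ)) * c :=
          mul_le_mul_of_nonneg_right h1 hc0.le
      _ = q d := by rw [hc]; field_simp
  have lem2 : ∀ d, (q d : ℝ) ≤ ((α d : ℝ) + 1) * c := by
    intro d
    have h1 : (q d : ℝ) * m / (ε * qσ) < (α d : ℝ) + 1 := by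
      rw [hα d]; exact Nat.lt_floor_add_one _
    have := mul_lt_mul_of_pos_right h1 hc0
    have heq : (q d : ℝ) * m / (ε * qσ) * c = q d := by rw [hc]; field_simp
    linarith [heq ▸ this]
  have key : (∑ d ∈ S, (q d : ℝ)) ≤ c * (∑ d ∈ S, (α d : ℝ)) + c * m := by
    calc (∑ d ∈ S, (q d : ℝ)) ≤ ∑ d ∈ S, ((α d : ℝ) + 1) * c :=
          Finset.sum_le_sum fun d _ => lem2 d
      _ = c * (∑ d ∈ S, (α d : ℝ)) + c * S.card := by
          simp only [add_mul, one_mul, Finset.sum_add_distrib, Finset.sum_const, nsmul_eq_mul, Finset.mul_sum]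
          rw [mul_comm (S.card : ℝ) c]
          congr 1
          exact Finset.sum_congr rfl fun d _ => mul_comm _ _
      _ ≤ c * (∑ d ∈ S, (α d : ℝ)) + c * m := by
          have : (S.card : ℝ) ≤ m := by exact_mod_cast hScard
          nlinarith
  have hSO : (∑ d ∈ S, (α d : ℝ)) ≤ ∑ d ∈ O, (α d : ℝ) := by
    exact_mod_cast hmin O hO
  have hOq : c * (∑ d ∈ O, (α d : ℝ)) ≤ ∑ d ∈ O, (q d : ℝ) := by
    calc c * (∑ d ∈ O, (α d : ℝ)) = ∑ d ∈ O, (α d : ℝ) * c := by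
          rw [Finset.mul_sum]; exact Finset.sum_congr rfl fun d _ => mul_comm _ _
      _ ≤ ∑ d ∈ O, (q d : ℝ) := Finset.sum_le_sum fun d _ => lem1 d
  have hcm : c * m = ε * qσ := by rw [hc]; field_simp
  have : c * m ≤ ε * ∑ d ∈ O, (q d : ℝ) := by
    rw [hcm]; exact mul_le_mul_of_nonneg_left hOPT hε0.le
  nlinarith
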